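/- arXiv:2402.08525 — 2 statements merged into one kernel-verified Lean document; each statement's English description precedes it below -/
import Mathlib

section
/- Single-digit case: if A = {b−1} (so N = 1), then the moments of μ on [0,1) are u₀ = b/(b−1) and, for every m ≥ 1, u_m = Σ_{l=1}^∞ b^{−l} (1 − b^{−l})^m. -/
open MeasureTheory

def Admissible (b : ℕ) (A : Finset ℕ) (n : ℕ) : Prop :=
  (∀ d ∈ Nat.digits b n, d ∈ A) ∧ (n = 0 → 0 ∈ A)

instance (b : ℕ) (A : Finset ℕ) (n : ℕ) : Decidable (Admissible b A n) := by
  unfold Admissible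
  infer_instance

noncomputable def kempnerMeasure (b : ℕ) (A : Finset ℕ) : Measure ℝ :=
  if 0 ∈ A then
    Measure.sum fun l : ℕ =>
      ((b : ENNReal) ^ l)⁻¹ •
        Measure.sum fun n : {n : ℕ // Admissible b A n} =>
          Measure.dirac (((n : ℕ) : ℝ) / (b : ℝ) ^ l)
  else
    Measure.dirac 0 +
      Measure.sum fun l : ℕ =>
        ((b : ENNReal) ^ l)⁻¹ •
          Measure.sum
            (fun n : {n : ℕ // Admissible b A n ∧ l ≤ (Nat.digits b n).length} =>
              Measure.dirac (((n : ℕ) : ℝ) / (b : ℝ) ^ l))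

noncomputable def moment (b : ℕ) (A : Finset ℕ) (m : ℕ) : ℝ :=
  ∫ x in Set.Ico (0 : ℝ) 1, x ^ m ∂(kempnerMeasure b A)

noncomputable def kempnerSum (b : ℕ) (A : Finset ℕ) : ℝ :=
  ∑' n : {n : ℕ // 0 < n ∧ Admissible b A n}, (1 : ℝ) / ((n : ℕ) : ℝ)

lemma digits_pow_sub_one {b : ℕ} (hb : 1 < b) :
    ∀ k, Nat.digits b (b ^ k - 1) = List.replicate k (b - 1) := by
  intro k
  induction k with
  | zero => simp
  | succ k ih =>
    have h1 : 1 ≤ b ^ k := Nat.one_le_pow _ _ (by omega)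
    have hbb : b * 1 ≤ b * b ^ k := Nat.mul_le_mul_left b h1
    rw [mul_one] at hbb
    have hn : b ^ (k+1) - 1 = b * (b ^ k - 1) + (b - 1) := by
      have e1 : b * (b ^ k - 1) = b * b ^ k - b := by
        obtain ⟨c, hc⟩ := Nat.exists_eq_add_of_le h1
        rw [hc]; simp [Nat.mul_add]
      rw [e1, pow_succ, mul_comm (b ^ k) b]
      omega
    have hpos : 0 < b ^ (k+1) - 1 := by
      rw [pow_succ, mul_comm (b ^ k) b]; omega
    rw [Nat.digits_def' hb hpos, hn]
    have hmod : (b * (b ^ k - 1) + (b - 1)) % b = b - 1 := by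
      rw [Nat.mul_add_mod]
      exact Nat.mod_eq_of_lt (by omega)
    have hdiv : (b * (b ^ k - 1) + (b - 1)) / b = b ^ k - 1 := by
      rw [Nat.mul_add_div (by omega)]
      simp [Nat.div_eq_of_lt (by omega : b - 1 < b)]
    rw [hmod, hdiv, ih, List.replicate_succ]

lemma admissible_iff {b : ℕ} (hb : 1 < b) (n : ℕ) :
    Admissible b {b-1} n ↔ ∃ k, 1 ≤ k ∧ n = b ^ k - 1 := by
  constructor
  · rintro ⟨hd, h0⟩
    have hn0 : n ≠ 0 := by
      intro h; have := h0 h; simp at this; omega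
    refine ⟨(Nat.digits b n).length, ?_, ?_⟩
    · have hne : Nat.digits b n ≠ [] := Nat.digits_ne_nil_iff_ne_zero.mpr hn0
      cases h : Nat.digits b n with
      | nil => exact absurd h hne
      | cons a l => simp [h]
    · have hrep : Nat.digits b n = List.replicate (Nat.digits b n).length (b-1) :=
        List.eq_replicate_of_mem (fun d hd' => by simpa using hd d hd')
      have key : Nat.digits b n = Nat.digits b (b ^ (Nat.digits b n).length - 1) := by
        rw [digits_pow_sub_one hb]; exact hrep
      have h2 := congrArg (Nat.ofDigits b) key
      rwa [Nat.ofDigits_digits, Nat.ofDigits_digits] at h2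
  · rintro ⟨k, hk, rfl⟩
    constructor
    · intro d hd'
      rw [digits_pow_sub_one hb] at hd'
      simp at hd' ⊢
      omega
    · intro h
      have : b ≤ b ^ k := Nat.le_self_pow (by omega) b
      omega

lemma subtype_char {b l : ℕ} (hb : 1 < b) {n : ℕ}
    (h : Admissible b {b-1} n ∧ l ≤ (Nat.digits b n).length)
    (hlt : n < b ^ l) : n = b ^ l - 1 ∧ 1 ≤ l := by
  obtain ⟨k, hk1, rfl⟩ := (admissible_iff hb n).mp h.1
  have hlen : (Nat.digits b (b ^ k - 1)).length = k := by
    rw [digits_pow_sub_one hb]; simp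
  have hlk : l ≤ k := by rw [hlen] at h; exact h.2
  have hkb : b ^ k ≤ b ^ l := by
    have h1 : 1 ≤ b ^ k := Nat.one_le_pow _ _ (by omega)
    omega
  have : k ≤ l := (Nat.pow_le_pow_iff_right hb).mp hkb
  have : k = l := le_antisymm this hlk
  subst this
  exact ⟨rfl, hk1⟩

lemma moment_single {b : ℕ} (hb : 1 < b) (m : ℕ) :
    moment b {b-1} m
      = (0:ℝ)^m + ∑' l : ℕ, ((b:ℝ)^(l+1))⁻¹ * (1 - ((b:ℝ)^(l+1))⁻¹)^m := by
  have hbR : (1:ℝ) < b := by exact_mod_cast hb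
  have hbR0 : (0:ℝ) < b := by linarith
  have h0A : 0 ∉ ({b-1} : Finset ℕ) := by simp; omega
  set s : Set ℝ := Set.Ico 0 1 with hs
  set g : ℝ → ENNReal := s.indicator fun x => ENNReal.ofReal (x ^ m) with hgdef
  -- Step A: the integral as a lintegral
  have hA : moment b {b-1} m = (∫⁻ x, g x ∂(kempnerMeasure b {b-1})).toReal := by
    rw [moment]
    rw [integral_eq_lintegral_of_nonneg_ae
      (ae_restrict_of_forall_mem measurableSet_Ico (fun x hx => pow_nonneg hx.1 m))
      ((measurable_id.pow_const m).aestronglyMeasurable)]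
    rw [← lintegral_indicator measurableSet_Ico]
  -- Step B: unfold the measure and compute
  have hB : ∫⁻ x, g x ∂(kempnerMeasure b {b-1})
      = g 0 + ∑' l : ℕ, ((b : ENNReal) ^ l)⁻¹ *
          ∑' n : {n : ℕ // Admissible b {b-1} n ∧ l ≤ (Nat.digits b n).length},
            g (((n : ℕ) : ℝ) / (b : ℝ) ^ l) := by
    rw [kempnerMeasure, if_neg h0A, lintegral_add_measure, lintegral_dirac,
      lintegral_sum_measure]
    congr 1
    refine tsum_congr fun l => ?_
    rw [lintegral_smul_measure, lintegral_sum_measure]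
    congr 1
    exact tsum_congr fun n => lintegral_dirac _ _
  -- Step C: inner tsum
  have hC : ∀ l : ℕ,
      (∑' n : {n : ℕ // Admissible b {b-1} n ∧ l ≤ (Nat.digits b n).length},
        g (((n : ℕ) : ℝ) / (b : ℝ) ^ l))
      = if l = 0 then 0 else ENNReal.ofReal ((1 - ((b:ℝ)^l)⁻¹)^m) := by
    intro l
    have hgz : ∀ (n : {n : ℕ // Admissible b {b-1} n ∧ l ≤ (Nat.digits b n).length}),
        (n : ℕ) ≠ b ^ l - 1 ∨ l = 0 → g (((n : ℕ) : ℝ) / (b : ℝ) ^ l) = 0 := by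
      rintro ⟨n, hn⟩ hne
      apply Set.indicator_of_notMem
      rw [hs]
      rintro ⟨-, hlt1⟩
      have hltn : (n : ℝ) < (b : ℝ) ^ l := by
        rwa [div_lt_one (by positivity)] at hlt1
      have hltn' : n < b ^ l := by exact_mod_cast hltn
      obtain ⟨h1, h2⟩ := subtype_char hb hn hltn'
      simp only at hne
      rcases hne with h | h
      · exact h h1
      · omega
    rcases Nat.eq_zero_or_pos l with rfl | hl
    · rw [if_pos rfl]
      rw [ENNReal.tsum_eq_zero]
      exact fun n => hgz n (Or.inr rfl)
    · rw [if_neg (by omega)]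
      have hadm : Admissible b {b-1} (b ^ l - 1) :=
        (admissible_iff hb _).mpr ⟨l, hl, rfl⟩
      have hlen : l ≤ (Nat.digits b (b ^ l - 1)).length := by
        rw [digits_pow_sub_one hb]; simp
      set e : {n : ℕ // Admissible b {b-1} n ∧ l ≤ (Nat.digits b n).length} :=
        ⟨b ^ l - 1, hadm, hlen⟩ with he
      rw [tsum_eq_single e (fun n' hne => hgz n' (Or.inl (by
        intro h
        apply hne
        exact Subtype.ext h)))]
      have h1n : 1 ≤ b ^ l := Nat.one_le_pow _ _ (by omega)
      have hcast : (((b ^ l - 1 : ℕ) : ℝ)) / (b : ℝ) ^ l = 1 - ((b:ℝ)^l)⁻¹ := by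
        rw [Nat.cast_sub h1n]
        push_cast
        rw [sub_div, div_self (by positivity)]
        congr 1
        rw [one_div]
      have hmem : (1 : ℝ) - ((b:ℝ)^l)⁻¹ ∈ s := by
        constructor
        · have : ((b:ℝ)^l)⁻¹ ≤ 1 := by
            rw [inv_le_one_iff₀]
            right
            exact one_le_pow₀ (le_of_lt hbR)
          linarith
        · have : (0:ℝ) < ((b:ℝ)^l)⁻¹ := by positivity
          linarith
      show g _ = _
      rw [he]
      simp only
      rw [hcast, hgdef, Set.indicator_of_mem hmem]
  -- real coefficient function
  set fr : ℕ → ℝ := fun l => if l = 0 then 0 else ((b:ℝ)^l)⁻¹ * (1 - ((b:ℝ)^l)⁻¹)^m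
    with hfr
  have hfr_nonneg : ∀ l, 0 ≤ fr l := by
    intro l
    simp only [hfr]
    rcases Nat.eq_zero_or_pos l with rfl | hl
    · simp
    · rw [if_neg (by omega)]
      have hinv1 : ((b:ℝ)^l)⁻¹ ≤ 1 := by
        rw [inv_le_one_iff₀]; right; exact one_le_pow₀ (le_of_lt hbR)
      have : (0:ℝ) ≤ 1 - ((b:ℝ)^l)⁻¹ := by linarith
      positivity
  have hfr_le : ∀ l, fr l ≤ ((b:ℝ)⁻¹)^l := by
    intro l
    simp only [hfr]
    rcases Nat.eq_zero_or_pos l with rfl | hl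
    · simp
    · rw [if_neg (by omega)]
      have hinv1 : ((b:ℝ)^l)⁻¹ ≤ 1 := by
        rw [inv_le_one_iff₀]; right; exact one_le_pow₀ (le_of_lt hbR)
      have h0 : (0:ℝ) ≤ 1 - ((b:ℝ)^l)⁻¹ := by linarith
      have hle1 : (1 - ((b:ℝ)^l)⁻¹) ≤ 1 := by
        have : (0:ℝ) ≤ ((b:ℝ)^l)⁻¹ := by positivity
        linarith
      calc ((b:ℝ)^l)⁻¹ * (1 - ((b:ℝ)^l)⁻¹)^m
          ≤ ((b:ℝ)^l)⁻¹ * 1 := by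
            apply mul_le_mul_of_nonneg_left (pow_le_one₀ h0 hle1) (by positivity)
        _ = ((b:ℝ)⁻¹)^l := by rw [mul_one, inv_pow]
  have hsum : Summable fr :=
    Summable.of_nonneg_of_le hfr_nonneg hfr_le
      (summable_geometric_of_lt_one (by positivity) (by
        rw [inv_lt_one_iff₀]; right; exact hbR))
  -- Step D: term-wise conversion to ofReal
  have hD : ∀ l : ℕ,
      ((b : ENNReal) ^ l)⁻¹ * (if l = 0 then 0 else ENNReal.ofReal ((1 - ((b:ℝ)^l)⁻¹)^m))
        = ENNReal.ofReal (fr l) := by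
    intro l
    rcases Nat.eq_zero_or_pos l with rfl | hl
    · simp [hfr]
    · rw [if_neg (by omega)]
      simp only [hfr]
      simp only [if_neg (by omega : ¬ l = 0)]
      have hcoef : ((b : ENNReal) ^ l)⁻¹ = ENNReal.ofReal (((b:ℝ)^l)⁻¹) := by
        rw [ENNReal.ofReal_inv_of_pos (by positivity), ENNReal.ofReal_pow (by positivity),
          ENNReal.ofReal_natCast]
      rw [hcoef, ← ENNReal.ofReal_mul (by positivity)]
  -- put it together
  have hg0 : g 0 = ENNReal.ofReal ((0:ℝ) ^ m) := by
    rw [hgdef]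
    exact Set.indicator_of_mem (by constructor <;> norm_num) _
  rw [hA, hB, hg0]
  have : (∑' l : ℕ, ((b : ENNReal) ^ l)⁻¹ *
          ∑' n : {n : ℕ // Admissible b {b-1} n ∧ l ≤ (Nat.digits b n).length},
            g (((n : ℕ) : ℝ) / (b : ℝ) ^ l))
      = ENNReal.ofReal (∑' l, fr l) := by
    rw [ENNReal.ofReal_tsum_of_nonneg hfr_nonneg hsum]
    exact tsum_congr fun l => by rw [hC l, hD l]
  rw [this, ← ENNReal.ofReal_add (by positivity) (tsum_nonneg hfr_nonneg),
    ENNReal.toReal_ofReal (add_nonneg (pow_nonneg le_rfl m) (tsum_nonneg hfr_nonneg))]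
  congr 1
  rw [Summable.tsum_eq_zero_add hsum]
  simp only [hfr, if_pos rfl, if_neg (Nat.succ_ne_zero _), zero_add]

theorem kempner_single_digit_moments (b : ℕ) (hb : 1 < b) :
    moment b {b - 1} 0 = (b : ℝ) / ((b : ℝ) - 1)
      ∧ ∀ m : ℕ, 1 ≤ m →
          moment b {b - 1} m
            = ∑' l : ℕ, ((b : ℝ) ^ (l + 1))⁻¹ * (1 - ((b : ℝ) ^ (l + 1))⁻¹) ^ m := by
  have hbR : (1:ℝ) < b := by exact_mod_cast hb
  constructor
  · rw [moment_single hb 0]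
    have h1 : ∀ l : ℕ, ((b:ℝ)^(l+1))⁻¹ * (1 - ((b:ℝ)^(l+1))⁻¹)^0 = (b:ℝ)⁻¹ * ((b:ℝ)⁻¹)^l := by
      intro l
      rw [pow_zero, mul_one, ← inv_pow, pow_succ, mul_comm]
    rw [tsum_congr h1, tsum_mul_left, tsum_geometric_of_lt_one (by positivity)
      (by rw [inv_lt_one_iff₀]; right; exact hbR)]
    have hb1 : (b:ℝ) - 1 ≠ 0 := by linarith
    have hb0 : (b:ℝ) ≠ 0 := by linarith
    field_simp
    ring
  · intro m hm
    rw [moment_single hb m, zero_pow (by omega), zero_add]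
end

section
/- For every integer b > 1 and every integer m ≥ 1, one has the strict inequality 1/(m+1) = ∫_0^1 t^m dt < (1 − b^{−1}) b Σ_{l=1}^∞ b^{−l} (1 − b^{−l})^m; consequently (m+1)(1 − b^{−1}) Σ_{l=1}^∞ b^{−l}(1 − b^{−l})^m > b^{−1}. -/
open Finset

/-- For `0 ≤ a < c` and `1 ≤ m`, `c^(m+1) - a^(m+1) < (m+1) * (c-a) * c^m`. -/
lemma pow_sub_pow_lt_aux (a c : ℝ) (ha : 0 ≤ a) (hac : a < c) (m : ℕ) (hm : 1 ≤ m) :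
    c ^ (m + 1) - a ^ (m + 1) < ((m : ℝ) + 1) * (c - a) * c ^ m := by
  have hc : 0 < c := lt_of_le_of_lt ha hac
  have key : (∑ i ∈ range (m + 1), c ^ i * a ^ (m - i)) * (c - a)
      = c ^ (m + 1) - a ^ (m + 1) := by
    have := geom_sum₂_mul c a (m + 1)
    simpa using this
  rw [← key]
  have hsum : (∑ i ∈ range (m + 1), c ^ i * a ^ (m - i)) < ((m : ℝ) + 1) * c ^ m := by
    have : ((m : ℝ) + 1) * c ^ m = ∑ _i ∈ range (m + 1), c ^ m := by
      rw [Finset.sum_const, card_range, nsmul_eq_mul]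
      push_cast; ring
    rw [this]
    apply Finset.sum_lt_sum
    · intro i hi
      simp only [mem_range] at hi
      calc c ^ i * a ^ (m - i) ≤ c ^ i * c ^ (m - i) := by
            apply mul_le_mul_of_nonneg_left (pow_le_pow_left₀ ha hac.le _) (by positivity)
        _ = c ^ m := by rw [← pow_add]; congr 1; omega
    · refine ⟨0, by simp, ?_⟩
      simp only [pow_zero, one_mul, Nat.sub_zero]
      exact pow_lt_pow_left₀ hac ha (by omega)
  have hca : 0 < c - a := sub_pos.mpr hac
  calc (∑ i ∈ range (m + 1), c ^ i * a ^ (m - i)) * (c - a)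
      < (((m : ℝ) + 1) * c ^ m) * (c - a) := by
        exact mul_lt_mul_of_pos_right hsum hca
    _ = ((m : ℝ) + 1) * (c - a) * c ^ m := by ring

theorem single_digit_moment_lower_bound (b : ℕ) (hb : 1 < b) (m : ℕ) (hm : 1 ≤ m) :
    ((m : ℝ) + 1)⁻¹ = ∫ t in (0 : ℝ)..1, t ^ m
      ∧ (∫ t in (0 : ℝ)..1, t ^ m)
          < (1 - (b : ℝ)⁻¹) * (b : ℝ) *
              ∑' l : ℕ, ((b : ℝ) ^ (l + 1))⁻¹ * (1 - ((b : ℝ) ^ (l + 1))⁻¹) ^ m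
      ∧ ((m : ℝ) + 1) * (1 - (b : ℝ)⁻¹) *
            ∑' l : ℕ, ((b : ℝ) ^ (l + 1))⁻¹ * (1 - ((b : ℝ) ^ (l + 1))⁻¹) ^ m
          > (b : ℝ)⁻¹ := by
  have hb1 : (1 : ℝ) < (b : ℝ) := by exact_mod_cast hb
  have hb0 : (0 : ℝ) < (b : ℝ) := by linarith
  set x : ℝ := (b : ℝ)⁻¹ with hxdef
  have hx0 : 0 < x := by positivity
  have hx1 : x < 1 := by
    rw [hxdef]; exact inv_lt_one_of_one_lt₀ hb1
  have hbx : (b : ℝ) * x = 1 := mul_inv_cancel₀ (ne_of_gt hb0)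
  have hterm : ∀ l : ℕ, ((b : ℝ) ^ (l + 1))⁻¹ = x ^ (l + 1) := fun l => by
    rw [hxdef, inv_pow]
  -- rewrite the tsum
  have htsum_eq : (∑' l : ℕ, ((b : ℝ) ^ (l + 1))⁻¹ * (1 - ((b : ℝ) ^ (l + 1))⁻¹) ^ m)
      = ∑' l : ℕ, x ^ (l + 1) * (1 - x ^ (l + 1)) ^ m := by
    exact tsum_congr fun l => by rw [hterm l]
  set f : ℕ → ℝ := fun l => x ^ (l + 1) * (1 - x ^ (l + 1)) ^ m with hf
  set S : ℝ := ∑' l : ℕ, f l with hS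
  -- basic bounds on x^l
  have hxl1 : ∀ l : ℕ, x ^ l ≤ 1 := fun l => pow_le_one₀ hx0.le hx1.le
  have hxlpos : ∀ l : ℕ, 0 < x ^ l := fun l => pow_pos hx0 l
  -- f is nonneg and summable
  have hf_nonneg : ∀ l, 0 ≤ f l := by
    intro l
    apply mul_nonneg (hxlpos _).le
    apply pow_nonneg
    linarith [hxl1 (l + 1)]
  have hgeo : Summable (fun l : ℕ => x ^ (l + 1)) := by
    simpa [pow_succ, mul_comm] using (summable_geometric_of_lt_one hx0.le hx1).mul_left x
  have hf_summable : Summable f := by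
    apply Summable.of_nonneg_of_le hf_nonneg _ hgeo
    intro l
    rw [hf]
    calc x ^ (l + 1) * (1 - x ^ (l + 1)) ^ m
        ≤ x ^ (l + 1) * 1 := by
          apply mul_le_mul_of_nonneg_left _ (hxlpos _).le
          apply pow_le_one₀ (by linarith [hxl1 (l + 1)]) (by linarith [hxlpos (l + 1)])
      _ = x ^ (l + 1) := mul_one _
  -- telescoping sum g
  set g : ℕ → ℝ := fun l => (1 - x ^ (l + 1)) ^ (m + 1) - (1 - x ^ l) ^ (m + 1) with hg
  have hg_nonneg : ∀ l, 0 ≤ g l := by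
    intro l
    rw [hg]
    simp only [sub_nonneg]
    apply pow_le_pow_left₀ (by linarith [hxl1 l])
    have : x ^ (l + 1) ≤ x ^ l := pow_le_pow_of_le_one hx0.le hx1.le (by omega)
    linarith
  have hg_sum : HasSum g 1 := by
    rw [(hasSum_iff_tendsto_nat_of_nonneg hg_nonneg 1)]
    have hps : ∀ n : ℕ, (∑ l ∈ range n, g l) = (1 - x ^ n) ^ (m + 1) := by
      intro n
      have := Finset.sum_range_sub (fun l => (1 - x ^ l) ^ (m + 1)) n
      simp only [hg]
      rw [this]
      simp
    simp only [hps]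
    have hx_tend : Filter.Tendsto (fun n : ℕ => x ^ n) Filter.atTop (nhds 0) :=
      tendsto_pow_atTop_nhds_zero_of_lt_one hx0.le hx1
    have : Filter.Tendsto (fun n : ℕ => (1 - x ^ n) ^ (m + 1)) Filter.atTop
        (nhds ((1 - 0) ^ (m + 1))) := by
      exact ((Filter.Tendsto.const_sub 1 hx_tend).pow (m + 1))
    simpa using this
  -- the key pointwise inequality  g l < (m+1)*(b-1) * f l
  have hkey : ∀ l : ℕ, g l < ((m : ℝ) + 1) * ((b : ℝ) - 1) * f l := by
    intro l
    have ha : (0 : ℝ) ≤ 1 - x ^ l := by linarith [hxl1 l]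
    have hac : 1 - x ^ l < 1 - x ^ (l + 1) := by
      have : x ^ (l + 1) < x ^ l := by
        rw [pow_succ]
        nlinarith [hxlpos l]
      linarith
    have hdiff : (1 - x ^ (l + 1)) - (1 - x ^ l) = ((b : ℝ) - 1) * x ^ (l + 1) := by
      have : ((b : ℝ) - 1) * x ^ (l + 1) = ((b : ℝ) * x) * x ^ l - x ^ (l + 1) := by
        rw [pow_succ]; ring
      rw [this, hbx]
      ring
    have := pow_sub_pow_lt_aux (1 - x ^ l) (1 - x ^ (l + 1)) ha hac m hm
    rw [hdiff] at this
    calc g l < ((m : ℝ) + 1) * (((b : ℝ) - 1) * x ^ (l + 1)) * (1 - x ^ (l + 1)) ^ m := this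
      _ = ((m : ℝ) + 1) * ((b : ℝ) - 1) * f l := by rw [hf]; ring
  -- summability of the dominating function
  have hh_summable : Summable (fun l => ((m : ℝ) + 1) * ((b : ℝ) - 1) * f l) :=
    hf_summable.mul_left _
  -- strict comparison of sums
  have hlt : (1 : ℝ) < ((m : ℝ) + 1) * ((b : ℝ) - 1) * S := by
    have := Summable.tsum_lt_tsum (i := 0) (fun l => (hkey l).le) (hkey 0) hg_sum.summable hh_summable
    rw [hg_sum.tsum_eq] at this
    rwa [tsum_mul_left] at this
  -- conclude
  have hintegral : (∫ t in (0 : ℝ)..1, t ^ m) = ((m : ℝ) + 1)⁻¹ := by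
    rw [integral_pow]
    push_cast
    norm_num
  have hm1pos : (0 : ℝ) < (m : ℝ) + 1 := by positivity
  have hb1pos : (0 : ℝ) < (b : ℝ) - 1 := by linarith
  refine ⟨hintegral.symm, ?_, ?_⟩
  · rw [hintegral, htsum_eq]
    have h1 : (1 - x) * (b : ℝ) = (b : ℝ) - 1 := by
      rw [sub_mul, one_mul, hxdef, inv_mul_cancel₀ (ne_of_gt hb0)]
    rw [h1, inv_eq_one_div, div_lt_iff₀ hm1pos]
    calc (1 : ℝ) < ((m : ℝ) + 1) * ((b : ℝ) - 1) * S := hlt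
      _ = (((b : ℝ) - 1) * S) * ((m : ℝ) + 1) := by ring
  · rw [htsum_eq]
    have h1x : 1 - x = ((b : ℝ) - 1) * x := by
      have : ((b : ℝ) - 1) * x = (b : ℝ) * x - x := by ring
      rw [this, hbx]
    rw [gt_iff_lt, h1x]
    calc x = 1 * x := (one_mul _).symm
      _ < (((m : ℝ) + 1) * ((b : ℝ) - 1) * S) * x := mul_lt_mul_of_pos_right hlt hx0
      _ = ((m : ℝ) + 1) * (((b : ℝ) - 1) * x) * S := by ring
end
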